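/- Let X be an Archimedean pervasive pre-Riesz space with vector lattice cover (Y, i), B ⊆ X a band, and B̂ ⊆ Y an extension band of B (so i⁻¹(B̂) = B). Then i(B) is majorizing in B̂ if and only if i(B) is order dense in B̂. Moreover, in that case B is directed and pervasive, and B̂ is a vector lattice cover of B. -/

import Mathlib

open Set

section Defs

variable {Z : Type*} [AddCommGroup Z] [PartialOrder Z] [Module ℝ Z]

/-- Set of common upper bounds of `x` and `-x`. -/
def pmUB (x : Z) : Set Z := upperBounds {x, -x}

/-- Disjointness in an ordered vector space: `{±(x+y)}ᵘ = {±(x−y)}ᵘ`. -/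
def Disj (x y : Z) : Prop :=
  upperBounds {x + y, -(x + y)} = upperBounds {x - y, -(x - y)}

/-- Disjoint complement of a set. -/
def dcomp (M : Set Z) : Set Z := {x : Z | ∀ y ∈ M, Disj x y}

/-- `D` is a linear subspace. -/
def IsSubsp (D : Set Z) : Prop :=
  (0 : Z) ∈ D ∧ (∀ x ∈ D, ∀ y ∈ D, x + y ∈ D) ∧ ∀ (r : ℝ), ∀ x ∈ D, r • x ∈ D

/-- A band is a linear subspace `B` with `Bᵈᵈ = B`. -/
def IsBand (B : Set Z) : Prop := IsSubsp B ∧ dcomp (dcomp B) = B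

/-- `M` is solid: `{±y}ᵘ ⊆ {±x}ᵘ` with `y ∈ M` implies `x ∈ M`. -/
def IsSolid (M : Set Z) : Prop := ∀ x : Z, ∀ y ∈ M, pmUB y ⊆ pmUB x → x ∈ M

/-- An ideal is a solid linear subspace. -/
def IsIdeal (I : Set Z) : Prop := IsSubsp I ∧ IsSolid I

/-- The ideal generated by `S`. -/
def idealGen (S : Set Z) : Set Z := ⋂₀ {I : Set Z | IsIdeal I ∧ S ⊆ I}

/-- The band generated by `S`. -/
def bandGen (S : Set Z) : Set Z := ⋂₀ {B : Set Z | IsBand B ∧ S ⊆ B}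

/-- A subset is directed if any two elements have a common upper bound in it. -/
def IsDirectedSet (D : Set Z) : Prop := ∀ x ∈ D, ∀ y ∈ D, ∃ z ∈ D, x ≤ z ∧ y ≤ z

/-- `D` is order dense in `E` (infima taken within `E`): every `y ∈ E` is the
infimum, computed in `E`, of `{w ∈ D | y ≤ w}`. -/
def OrderDenseIn (D E : Set Z) : Prop :=
  ∀ y ∈ E, y ∈ lowerBounds {w : Z | w ∈ D ∧ y ≤ w} ∧
    ∀ z ∈ E, z ∈ lowerBounds {w : Z | w ∈ D ∧ y ≤ w} → z ≤ y

/-- `D` is majorizing in `E`. -/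
def MajorizingIn (D E : Set Z) : Prop := ∀ y ∈ E, ∃ d ∈ D, y ≤ d

end Defs
section AuxY
set_option linter.unusedSectionVars false
variable {Y : Type*} [AddCommGroup Y] [Lattice Y] [CovariantClass Y Y (· + ·) (· ≤ ·)]
  [Module ℝ Y] [PosSMulMono ℝ Y]

lemma aux_half_le {p q : Y} (h : p + p ≤ q + q) : p ≤ q := by
  have h2 : (2:ℝ) • p ≤ (2:ℝ) • q := by rwa [two_smul, two_smul]
  have h3 := smul_le_smul_of_nonneg_left h2 (by norm_num : (0:ℝ) ≤ (2:ℝ)⁻¹)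
  rw [smul_smul, smul_smul] at h3
  norm_num at h3
  exact h3

lemma aux_inf_le_of_sum {p q r : Y} (h : p + q = r + r) : p ⊓ q ≤ r :=
  aux_half_le (le_of_le_of_eq (add_le_add inf_le_left inf_le_right) h)

lemma aux_pmUB_eq (w : Y) : pmUB w = Set.Ici |w| := by
  ext u
  constructor
  · intro h
    exact sup_le (h (Set.mem_insert _ _)) (h (Set.mem_insert_of_mem _ rfl))
  · intro h v hv
    simp only [Set.mem_insert_iff, Set.mem_singleton_iff] at hv
    rcases hv with rfl | rfl
    · exact le_trans le_sup_left h
    · exact le_trans le_sup_right h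

lemma aux_disj_iff {x y : Y} : Disj x y ↔ |x + y| = |x - y| := by
  have h0 : Disj x y ↔ pmUB (x + y) = pmUB (x - y) := Iff.rfl
  rw [h0, aux_pmUB_eq, aux_pmUB_eq, Set.Ici_inj]

lemma aux_abs_sup_abs (a b : Y) : |a + b| ⊔ |a - b| = |a| + |b| := by
  have h1 : (a + b) ⊔ (a - b) = a + (b ⊔ -b) := by
    rw [add_sup, ← sub_eq_add_neg]
  have h2 : (-(a + b)) ⊔ (-(a - b)) = -a + (b ⊔ -b) := by
    rw [show -(a + b) = -a + -b from by abel, show -(a - b) = -a + b from by abel, add_sup]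
    exact sup_comm _ _
  calc |a + b| ⊔ |a - b| = ((a+b) ⊔ -(a+b)) ⊔ ((a-b) ⊔ -(a-b)) := rfl
    _ = ((a+b) ⊔ (a-b)) ⊔ ((-(a+b)) ⊔ (-(a-b))) := sup_sup_sup_comm _ _ _ _
    _ = (a + (b ⊔ -b)) ⊔ (-a + (b ⊔ -b)) := by rw [h1, h2]
    _ = (a ⊔ -a) + (b ⊔ -b) := (sup_add _ _ _).symm
    _ = |a| + |b| := rfl

lemma aux_abs_add_abs (a b : Y) : |a + b| + |a - b| = |a + a| ⊔ |b + b| := by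
  calc |a + b| + |a - b|
      = ((a+b) ⊔ -(a+b)) + ((a-b) ⊔ -(a-b)) := rfl
    _ = ((a+b) + ((a-b) ⊔ -(a-b))) ⊔ ((-(a+b)) + ((a-b) ⊔ -(a-b))) := sup_add _ _ _
    _ = (((a+b)+(a-b)) ⊔ ((a+b) + -(a-b))) ⊔ (((-(a+b))+(a-b)) ⊔ ((-(a+b)) + -(a-b))) := by
        rw [add_sup, add_sup]
    _ = ((a+a) ⊔ (b+b)) ⊔ ((-(b+b)) ⊔ (-(a+a))) := by
        congr 1 <;> congr 1 <;> abel
    _ = ((a+a) ⊔ (-(a+a))) ⊔ ((b+b) ⊔ (-(b+b))) := by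
        rw [sup_comm (-(b+b)) (-(a+a)), sup_sup_sup_comm]
    _ = |a + a| ⊔ |b + b| := rfl

lemma aux_abs_double (a : Y) : |a + a| = |a| + |a| := by
  refine le_antisymm ?_ ?_
  · refine sup_le (add_le_add (le_abs_self a) (le_abs_self a)) ?_
    rw [show -(a + a) = -a + -a from by abel]
    exact add_le_add (neg_le_abs a) (neg_le_abs a)
  · calc |a| + |a| = (a + (a ⊔ -a)) ⊔ (-a + (a ⊔ -a)) := sup_add _ _ _
      _ = ((a+a) ⊔ (a + -a)) ⊔ ((-a + a) ⊔ (-a + -a)) := by rw [add_sup, add_sup]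
      _ ≤ |a + a| := by
          refine sup_le (sup_le ?_ ?_) (sup_le ?_ ?_)
          · exact le_abs_self _
          · rw [add_neg_cancel]; exact abs_nonneg _
          · rw [neg_add_cancel]; exact abs_nonneg _
          · rw [show -a + -a = -(a + a) from by abel]; exact neg_le_abs _
lemma aux_double_sup_le (p q : Y) : (p ⊔ q) + (p ⊔ q) ≤ (p + p) ⊔ (q + q) := by
  have key : ∀ r : Y, r + r ≤ (p+p) ⊔ (q+q) → r ≤ (2:ℝ)⁻¹ • ((p+p) ⊔ (q+q)) := by
    intro r hr
    have h2 : (2:ℝ) • r ≤ (p+p) ⊔ (q+q) := by rwa [two_smul]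
    have h3 := smul_le_smul_of_nonneg_left h2 (by norm_num : (0:ℝ) ≤ (2:ℝ)⁻¹)
    rwa [smul_smul, (by norm_num : (2:ℝ)⁻¹ * 2 = 1), one_smul] at h3
  have hs : p ⊔ q ≤ (2:ℝ)⁻¹ • ((p+p) ⊔ (q+q)) :=
    sup_le (key p le_sup_left) (key q le_sup_right)
  have h4 := smul_le_smul_of_nonneg_left hs (by norm_num : (0:ℝ) ≤ (2:ℝ))
  rwa [smul_smul, (by norm_num : (2:ℝ) * 2⁻¹ = 1), one_smul, two_smul] at h4

lemma aux_abs_inf_abs_le (a y : Y) : |a + y| ⊓ |a - y| ≤ |a| ⊔ |y| := by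
  letI := AddCommGroup.toDistribLattice Y
  calc |a + y| ⊓ |a - y|
      = ((a+y) ⊔ -(a+y)) ⊓ ((a-y) ⊔ -(a-y)) := rfl
    _ = ((a+y) ⊓ ((a-y) ⊔ -(a-y))) ⊔ ((-(a+y)) ⊓ ((a-y) ⊔ -(a-y))) := inf_sup_right _ _ _
    _ = (((a+y) ⊓ (a-y)) ⊔ ((a+y) ⊓ (-(a-y)))) ⊔ (((-(a+y)) ⊓ (a-y)) ⊔ ((-(a+y)) ⊓ (-(a-y)))) := by
        rw [inf_sup_left, inf_sup_left]
    _ ≤ |a| ⊔ |y| := by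
        refine sup_le (sup_le ?_ ?_) (sup_le ?_ ?_)
        · exact (aux_inf_le_of_sum (show (a+y)+(a-y) = a + a from by abel)).trans
            ((le_abs_self a).trans le_sup_left)
        · exact (aux_inf_le_of_sum (show (a+y)+(-(a-y)) = y + y from by abel)).trans
            ((le_abs_self y).trans le_sup_right)
        · exact (aux_inf_le_of_sum (show (-(a+y))+(a-y) = -y + -y from by abel)).trans
            ((neg_le_abs y).trans le_sup_right)
        · exact (aux_inf_le_of_sum (show (-(a+y))+(-(a-y)) = -a + -a from by abel)).trans
            ((neg_le_abs a).trans le_sup_left)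

lemma aux_inf_eq_zero_of_disj {a y : Y} (h : Disj a y) : |a| ⊓ |y| = 0 := by
  rw [aux_disj_iff] at h
  have hsup : |a + y| ⊔ |a - y| = |a| + |y| := aux_abs_sup_abs a y
  have hc : |a + y| = |a| + |y| := by rw [← hsup, ← h, sup_idem]
  have hle : |a| + |y| ≤ |a| ⊔ |y| := by
    calc |a| + |y| = |a + y| := hc.symm
      _ = |a + y| ⊓ |a - y| := by rw [← h, inf_idem]
      _ ≤ |a| ⊔ |y| := aux_abs_inf_abs_le a y
  have h2 : |a| ⊓ |y| + (|a| ⊔ |y|) ≤ 0 + (|a| ⊔ |y|) := by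
    rw [inf_add_sup, zero_add]; exact hle
  exact le_antisymm (le_of_add_le_add_right h2) (le_inf (abs_nonneg a) (abs_nonneg y))

lemma aux_disj_of_inf_zero {a y : Y} (h : |a| ⊓ |y| = 0) : Disj a y := by
  rw [aux_disj_iff]
  have hsup : |a + y| ⊔ |a - y| = |a| + |y| := aux_abs_sup_abs a y
  have hseq : |a| + |y| = |a| ⊔ |y| := by
    have h1 := inf_add_sup |a| |y|
    rw [h, zero_add] at h1
    exact h1.symm
  have hge : (|a| + |y|) + (|a| + |y|) ≤ |a + y| + |a - y| := by
    rw [aux_abs_add_abs, aux_abs_double, aux_abs_double, hseq]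
    exact aux_double_sup_le |a| |y|
  have h5 : |a + y| ⊓ |a - y| + (|a| + |y|) = |a + y| + |a - y| := by
    rw [← hsup]; exact inf_add_sup _ _
  have h6 : |a| + |y| ≤ |a + y| ⊓ |a - y| := by
    have h7 : (|a| + |y|) + (|a| + |y|) ≤ |a + y| ⊓ |a - y| + (|a| + |y|) := by
      rw [h5]; exact hge
    exact le_of_add_le_add_right h7
  have e1 : |a + y| ≤ |a - y| :=
    (le_sup_left.trans hsup.le).trans (h6.trans inf_le_right)
  have e2 : |a - y| ≤ |a + y| :=
    (le_sup_right.trans hsup.le).trans (h6.trans inf_le_left)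
  exact le_antisymm e1 e2

lemma aux_disj_symm {x y : Y} (h : Disj x y) : Disj y x := by
  rw [aux_disj_iff] at h ⊢
  calc |y + x| = |x + y| := by rw [add_comm]
    _ = |x - y| := h
    _ = |y - x| := abs_sub_comm x y

lemma aux_disj_mono {v w y : Y} (h : |v| ≤ |w|) (hd : Disj w y) : Disj v y := by
  apply aux_disj_of_inf_zero
  have h0 := aux_inf_eq_zero_of_disj hd
  refine le_antisymm ?_ (le_inf (abs_nonneg v) (abs_nonneg y))
  calc |v| ⊓ |y| ≤ |w| ⊓ |y| := inf_le_inf_right _ h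
    _ = 0 := h0

lemma aux_band_solid {M : Set Y} (hM : dcomp (dcomp M) = M) {v w : Y}
    (hw : w ∈ M) (h : |v| ≤ |w|) : v ∈ M := by
  have key : v ∈ dcomp (dcomp M) := by
    intro y hy
    exact aux_disj_mono h (aux_disj_symm (hy w hw))
  rwa [hM] at key

end AuxY
set_option maxHeartbeats 1000000 in
/-- For a band B in an Archimedean pervasive pre-Riesz space and an extension
band B̂ in Y: i(B) is majorizing in B̂ iff i(B) is order dense in B̂; in that
case B is directed (so B̂ is a vector lattice cover of B) and B is pervasive. -/
theorem stmt_17 {X Y : Type*} [AddCommGroup X] [PartialOrder X] [CovariantClass X X (· + ·) (· ≤ ·)] [Module ℝ X] [PosSMulMono ℝ X] [AddCommGroup Y] [Lattice Y] [CovariantClass Y Y (· + ·) (· ≤ ·)] [Module ℝ Y] [PosSMulMono ℝ Y]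
    (i : X →ₗ[ℝ] Y) (hbi : ∀ x : X, 0 ≤ i x ↔ 0 ≤ x)
    (hdense : ∀ y : Y, IsGLB {z : Y | z ∈ Set.range i ∧ y ≤ z} y)
    (harch : ∀ x y : X, (∀ n : ℕ, n • x ≤ y) → x ≤ 0)
    (hperv : ∀ y : Y, 0 < y → ∃ x : X, 0 < i x ∧ i x ≤ y)
    (B : Set X) (hB : IsBand B)
    (Bhat : Set Y) (hBhat : IsBand Bhat) (hext : i ⁻¹' Bhat = B) :
    (MajorizingIn (i '' B) Bhat ↔ OrderDenseIn (i '' B) Bhat) ∧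
      (MajorizingIn (i '' B) Bhat →
        IsDirectedSet B ∧ ∀ y ∈ Bhat, 0 < y → ∃ x ∈ B, 0 < i x ∧ i x ≤ y) := by
  obtain ⟨⟨hB0, hBadd, hBsm⟩, hBdd⟩ := hB
  obtain ⟨⟨hH0, hHadd, hHsm⟩, hHdd⟩ := hBhat
  have imono : ∀ u v : X, i u ≤ i v ↔ u ≤ v := by
    intro u v
    constructor
    · intro h
      have h1 : (0:Y) ≤ i (v - u) := by rw [map_sub]; exact sub_nonneg.2 h
      exact sub_nonneg.1 ((hbi (v - u)).1 h1)
    · intro h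
      have h1 := (hbi (v - u)).2 (sub_nonneg.2 h)
      rw [map_sub] at h1
      exact sub_nonneg.1 h1
  have memB : ∀ x : X, x ∈ B ↔ i x ∈ Bhat := by
    intro x; rw [← hext]; exact Iff.rfl
  have hsolid : ∀ v w : Y, w ∈ Bhat → |v| ≤ |w| → v ∈ Bhat := by
    intro v w hw h
    exact aux_band_solid hHdd hw h
  have Hneg : ∀ v ∈ Bhat, -v ∈ Bhat := by
    intro v hv
    have := hHsm (-1) v hv
    rwa [neg_one_smul] at this
  have Hsub : ∀ v w : Y, v ∈ Bhat → w ∈ Bhat → v - w ∈ Bhat := by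
    intro v w hv hw
    have := hHadd v hv (-w) (Hneg w hw)
    rwa [← sub_eq_add_neg] at this
  -- Majorizing → OrderDense
  have main : MajorizingIn (i '' B) Bhat → OrderDenseIn (i '' B) Bhat := by
    intro hmaj y hy
    refine ⟨fun w hw => hw.2, ?_⟩
    intro z hz hzlb
    by_contra hzy
    set d := (z - y) ⊔ 0 with hd
    have hzyB : z - y ∈ Bhat := Hsub z y hz hy
    have hd0 : (0:Y) ≤ d := le_sup_right
    have hdB : d ∈ Bhat := by
      apply hsolid d (z - y) hzyB
      rw [abs_of_nonneg hd0]
      exact sup_le (le_abs_self _) (abs_nonneg _)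
    have hdpos : 0 < d := by
      refine hd0.lt_of_ne fun h => hzy ?_
      have h1 : z - y ≤ d := le_sup_left
      rw [← h] at h1
      exact sub_nonpos.1 h1
    obtain ⟨x, hx0, hxd⟩ := hperv d hdpos
    have hixB : i x ∈ Bhat :=
      hsolid (i x) d hdB (by rw [abs_of_nonneg hx0.le, abs_of_nonneg hd0]; exact hxd)
    have hxB : x ∈ B := (memB x).2 hixB
    obtain ⟨w0, ⟨b0, hb0B, rfl⟩, hyb0⟩ := hmaj y hy
    obtain ⟨w1, ⟨b1, hb1B, rfl⟩, hyb1⟩ := hmaj (-y) (Hneg y hy)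
    have key : ∀ n : ℕ, y ≤ i b0 - n • i x ∧ (i b0 - n • i x) ∈ i '' B := by
      intro n
      induction n with
      | zero => exact ⟨by simpa using hyb0, by simpa using ⟨b0, hb0B, rfl⟩⟩
      | succ n ih =>
        obtain ⟨ihy, ihmem⟩ := ih
        have hzv : z ≤ i b0 - n • i x := hzlb ⟨ihmem, ihy⟩
        have hstep : y + i x ≤ i b0 - n • i x := by
          have h1 : y + i x ≤ y + d := add_le_add le_rfl hxd
          have h2 : y + d = z ⊔ y := by
            rw [hd, add_sup, add_zero, show y + (z - y) = z from by abel]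
          calc y + i x ≤ y + d := h1
            _ = z ⊔ y := h2
            _ ≤ i b0 - n • i x := sup_le hzv ihy
        constructor
        · rw [succ_nsmul]
          calc y ≤ (i b0 - n • i x) - i x := le_sub_iff_add_le.2 hstep
            _ = i b0 - (n • i x + i x) := by abel
        · refine ⟨b0 - (n+1) • x, ?_, ?_⟩
          · have h1 : (((n+1:ℕ)):ℝ) • x ∈ B := hBsm _ x hxB
            rw [Nat.cast_smul_eq_nsmul] at h1
            have h2 : -((n+1) • x) ∈ B := by
              have h3 := hBsm (-1) _ h1
              rwa [neg_one_smul] at h3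
            have h4 := hBadd b0 hb0B _ h2
            rwa [← sub_eq_add_neg] at h4
          · rw [map_sub, map_nsmul]
    have harch' : ∀ n : ℕ, n • x ≤ b0 + b1 := by
      intro n
      have h1 : y + n • i x ≤ i b0 := le_sub_iff_add_le.1 (key n).1
      have h2 : n • i x ≤ i b0 - y := by
        rw [le_sub_iff_add_le, add_comm]
        exact h1
      have h3 : i b0 - y ≤ i b0 + i b1 := by
        rw [sub_eq_add_neg]
        exact add_le_add le_rfl hyb1
      have h4 : i ((n:ℕ) • x) ≤ i (b0 + b1) := by
        rw [map_add, map_nsmul]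
        exact h2.trans h3
      exact (imono _ _).1 h4
    have hx_le : x ≤ 0 := harch x (b0 + b1) harch'
    have hix_le : i x ≤ 0 := by
      have h5 := (imono x 0).2 hx_le
      rwa [map_zero] at h5
    exact absurd (lt_of_lt_of_le hx0 hix_le) (lt_irrefl 0)
  -- OrderDense → Majorizing
  have easy : OrderDenseIn (i '' B) Bhat → MajorizingIn (i '' B) Bhat := by
    intro hod y hy
    by_cases hS : ∃ w, w ∈ i '' B ∧ y ≤ w
    · obtain ⟨w, hw1, hw2⟩ := hS
      exact ⟨w, hw1, hw2⟩
    · have hall : ∀ z ∈ Bhat, z ≤ y := by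
        intro z hz
        exact (hod y hy).2 z hz (fun w hw => absurd ⟨w, hw⟩ hS)
      have hy0 : y ≤ 0 := by
        have h2 : y + y ≤ y := hall (y + y) (hHadd y hy y hy)
        exact add_le_iff_nonpos_left.1 h2
      exact ⟨i 0, ⟨0, hB0, rfl⟩, by rw [map_zero]; exact hy0⟩
  refine ⟨⟨main, easy⟩, ?_⟩
  intro hmaj
  constructor
  · intro x1 hx1 x2 hx2
    have h1 : i x1 ∈ Bhat := (memB x1).1 hx1
    have h2 : i x2 ∈ Bhat := (memB x2).1 hx2
    have hw : i x2 - i x1 ∈ Bhat := Hsub _ _ h2 h1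
    have hp : (i x2 - i x1) ⊔ 0 ∈ Bhat := by
      apply hsolid _ _ hw
      rw [abs_of_nonneg (le_sup_right : (0:Y) ≤ _)]
      exact sup_le (le_abs_self _) (abs_nonneg _)
    have hsupB : i x1 ⊔ i x2 ∈ Bhat := by
      have h3 := hHadd _ h1 _ hp
      rwa [add_sup, add_zero, show i x1 + (i x2 - i x1) = i x2 from by abel, sup_comm] at h3
    obtain ⟨w, ⟨b, hbB, rfl⟩, hle⟩ := hmaj _ hsupB
    exact ⟨b, hbB, (imono x1 b).1 (le_sup_left.trans hle), (imono x2 b).1 (le_sup_right.trans hle)⟩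
  · intro y hy hy0
    obtain ⟨x, hx0, hxy⟩ := hperv y hy0
    have hxB : i x ∈ Bhat :=
      hsolid _ _ hy (by rw [abs_of_nonneg hx0.le, abs_of_nonneg hy0.le]; exact hxy)
    exact ⟨x, (memB x).2 hxB, hx0, hxy⟩
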